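/- Fix Γ with 0 < Γ < 1. Every a* ∈ (0,1) at which a ↦ K(a,Γ) attains its maximum over [0,1) satisfies the stationarity equation [1 + a*² + Γ(1 − a*²)]² − 2·( r_e + a*⁴/r_e ) = 0, where r_e = 1 + P(a*,Γ). -/

import Mathlib

/-- The steady-state prediction error variance `P(a, Γ)`: the unique positive root of
`P² + (1 − a²)(1 − Γ)P − Γ(1 − a²) = 0`, given in closed form. -/
noncomputable def Pss (a Γ : ℝ) : ℝ :=
  ((1 - a ^ 2) * (Γ - 1) +
    Real.sqrt ((1 - a ^ 2) ^ 2 * (1 - Γ) ^ 2 + 4 * Γ * (1 - a ^ 2))) / 2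

/-- The steady-state Kalman gain factor `K_p = a·P/(1+P)`. -/
noncomputable def Kgain (a Γ : ℝ) : ℝ := a * Pss a Γ / (1 + Pss a Γ)

/-- `P̃ = K_p²/(1 − (a − K_p)²)`, the solution of the Lyapunov equation. -/
noncomputable def Ptilde (a Γ : ℝ) : ℝ :=
  (Kgain a Γ) ^ 2 / (1 - (a - Kgain a Γ) ^ 2)

/-- The closed-form error exponent `K(a, Γ) = ½·log(1+P) + ½·(1+P̃)/(1+P) − ½`. -/
noncomputable def Kexp (a Γ : ℝ) : ℝ :=
  (1 / 2) * Real.log (1 + Pss a Γ) + (1 / 2) * (1 + Ptilde a Γ) / (1 + Pss a Γ) - 1 / 2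

lemma Pss_pos {x Γ : ℝ} (hx : x ^ 2 < 1) (hΓ0 : 0 < Γ) (hΓ1 : Γ < 1) : 0 < Pss x Γ := by
  have hc : 0 < 1 - x ^ 2 := by linarith
  have h1 : (1 - x ^ 2) * (1 - Γ) <
      Real.sqrt ((1 - x ^ 2) ^ 2 * (1 - Γ) ^ 2 + 4 * Γ * (1 - x ^ 2)) := by
    rw [Real.lt_sqrt (mul_nonneg (le_of_lt hc) (by linarith))]
    nlinarith [mul_pos hΓ0 hc]
  rw [Pss]
  nlinarith [h1]

lemma Kexp_eq {x Γ : ℝ} (hx : x ^ 2 < 1) (hΓ0 : 0 < Γ) (hΓ1 : Γ < 1) :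
    Kexp x Γ = (1 / 2) * Real.log (1 + Pss x Γ) +
      (1 / 2) * (1 + x ^ 2 * (Pss x Γ) ^ 2 / ((1 + Pss x Γ) ^ 2 - x ^ 2)) / (1 + Pss x Γ)
      - 1 / 2 := by
  have hp := Pss_pos hx hΓ0 hΓ1
  set p := Pss x Γ with hpdef
  have hr : (0 : ℝ) < 1 + p := by linarith
  have hrne : (1 : ℝ) + p ≠ 0 := ne_of_gt hr
  have hd : 0 < (1 + p) ^ 2 - x ^ 2 := by nlinarith
  have hdne : (1 + p) ^ 2 - x ^ 2 ≠ 0 := ne_of_gt hd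
  have hkg : Kgain x Γ = x * p / (1 + p) := by rw [Kgain, ← hpdef]
  have hsub : x - x * p / (1 + p) = x / (1 + p) := by field_simp; ring
  have hne2 : 1 - (x / (1 + p)) ^ 2 ≠ 0 := by
    have h2 : (x / (1 + p)) ^ 2 < 1 := by
      rw [div_pow, div_lt_one (by positivity)]
      nlinarith
    exact ne_of_gt (by linarith)
  have hPt : Ptilde x Γ = x ^ 2 * p ^ 2 / ((1 + p) ^ 2 - x ^ 2) := by
    rw [Ptilde, hkg, hsub]
    field_simp
  rw [Kexp, hPt, ← hpdef]

theorem optimal_correlation_stationarity (Γ : ℝ) (hΓ0 : 0 < Γ) (hΓ1 : Γ < 1) :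
    ∀ astar ∈ Set.Ioo (0 : ℝ) 1,
      (∀ a ∈ Set.Ico (0 : ℝ) 1, Kexp a Γ ≤ Kexp astar Γ) →
      (1 + astar ^ 2 + Γ * (1 - astar ^ 2)) ^ 2 -
        2 * ((1 + Pss astar Γ) + astar ^ 4 / (1 + Pss astar Γ)) = 0 := by
  rintro astar ⟨h0, h1⟩ hmax
  have ha2 : astar ^ 2 < 1 := by nlinarith
  have h1a : 0 < 1 - astar ^ 2 := by linarith
  have hp : 0 < Pss astar Γ := Pss_pos ha2 hΓ0 hΓ1
  set p := Pss astar Γ with hpdef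
  have hr : (0 : ℝ) < 1 + p := by linarith
  have hrne : (1 : ℝ) + p ≠ 0 := ne_of_gt hr
  have hd : 0 < (1 + p) ^ 2 - astar ^ 2 := by nlinarith
  have hdne : (1 + p) ^ 2 - astar ^ 2 ≠ 0 := ne_of_gt hd
  -- basic derivative building blocks
  have h1' : HasDerivAt (fun y : ℝ => 1 - y ^ 2) (-(2 * astar)) astar := by
    simpa using (hasDerivAt_pow 2 astar).const_sub 1
  have hargpos : 0 < (1 - astar ^ 2) ^ 2 * (1 - Γ) ^ 2 + 4 * Γ * (1 - astar ^ 2) := by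
    nlinarith [mul_pos hΓ0 h1a, sq_nonneg ((1 - astar ^ 2) * (1 - Γ))]
  have hDarg : HasDerivAt
      (fun y : ℝ => (1 - y ^ 2) ^ 2 * (1 - Γ) ^ 2 + 4 * Γ * (1 - y ^ 2))
      (-4 * astar * ((1 - astar ^ 2) * (1 - Γ) ^ 2 + 2 * Γ)) astar := by
    have h := ((h1'.pow 2).mul_const ((1 - Γ) ^ 2)).add (h1'.const_mul (4 * Γ))
    refine h.congr_deriv ?_
    push_cast
    ring
  have hS : Real.sqrt ((1 - astar ^ 2) ^ 2 * (1 - Γ) ^ 2 + 4 * Γ * (1 - astar ^ 2))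
      = 2 * p + (1 - astar ^ 2) * (1 - Γ) := by
    have h : p = ((1 - astar ^ 2) * (Γ - 1) +
        Real.sqrt ((1 - astar ^ 2) ^ 2 * (1 - Γ) ^ 2 + 4 * Γ * (1 - astar ^ 2))) / 2 := by
      rw [hpdef, Pss]
    rw [h]; ring
  have hSpos : 0 < 2 * p + (1 - astar ^ 2) * (1 - Γ) := by
    rw [← hS]; exact Real.sqrt_pos.mpr hargpos
  have hSne : 2 * p + (1 - astar ^ 2) * (1 - Γ) ≠ 0 := ne_of_gt hSpos
  have hquad : p ^ 2 + (1 - astar ^ 2) * (1 - Γ) * p - Γ * (1 - astar ^ 2) = 0 := by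
    have hsq : (2 * p + (1 - astar ^ 2) * (1 - Γ)) ^ 2
        = (1 - astar ^ 2) ^ 2 * (1 - Γ) ^ 2 + 4 * Γ * (1 - astar ^ 2) := by
      rw [← hS]
      exact Real.sq_sqrt (le_of_lt hargpos)
    linear_combination hsq / 4
  -- derivative of Pss
  have hPdΓ : HasDerivAt (fun y => Pss y Γ)
      (2 * astar * ((1 - Γ) * p - Γ) / (2 * p + (1 - astar ^ 2) * (1 - Γ))) astar := by
    have h := ((h1'.mul_const (Γ - 1)).add (hDarg.sqrt (ne_of_gt hargpos))).div_const 2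
    have hfun : (fun y : ℝ => ((1 - y ^ 2) * (Γ - 1) +
        Real.sqrt ((1 - y ^ 2) ^ 2 * (1 - Γ) ^ 2 + 4 * Γ * (1 - y ^ 2))) / 2)
        = fun y => Pss y Γ := by
      funext y; rw [Pss]
    simp only [Pi.add_apply] at h
    rw [hfun] at h
    refine h.congr_deriv ?_
    rw [hS]
    field_simp
    ring
  have hPd : HasDerivAt (fun y => Pss y Γ)
      (-(2 * astar * p ^ 2 * (1 + p)) / ((1 - astar ^ 2) * ((1 + p) ^ 2 - astar ^ 2)))
      astar := by
    convert hPdΓ using 1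
    rw [div_eq_div_iff (mul_ne_zero (ne_of_gt h1a) hdne) hSne]
    linear_combination (-2 * astar - 4 * astar * p - 4 * astar * p ^ 2 + 2 * astar ^ 3) * hquad
  -- derivative of the simplified exponent expression
  have hr' : HasDerivAt (fun y => 1 + Pss y Γ)
      (-(2 * astar * p ^ 2 * (1 + p)) / ((1 - astar ^ 2) * ((1 + p) ^ 2 - astar ^ 2)))
      astar := hPd.const_add 1
  have hlog := (hr'.log hrne).const_mul (1 / 2 : ℝ)
  have hnum := (hasDerivAt_pow 2 astar).mul (hPd.pow 2)
  have hden := (hr'.pow 2).sub (hasDerivAt_pow 2 astar)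
  have hfrac := hnum.div hden hdne
  have hmid := ((hfrac.const_add 1).const_mul (1 / 2 : ℝ)).div hr' hrne
  have hgd0 := (hlog.add hmid).sub_const (1 / 2 : ℝ)
  have hgd : HasDerivAt (fun y => (1 / 2) * Real.log (1 + Pss y Γ) +
      (1 / 2) * (1 + y ^ 2 * (Pss y Γ) ^ 2 / ((1 + Pss y Γ) ^ 2 - y ^ 2)) / (1 + Pss y Γ)
      - 1 / 2)
      (-(astar * p ^ 2 * (((1 + astar ^ 2 + p) * (1 + p) - p * astar ^ 2) ^ 2
          - 2 * (1 + p) * ((1 + p) ^ 2 + astar ^ 4)))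
        / ((1 - astar ^ 2) * ((1 + p) ^ 2 - astar ^ 2) ^ 3)) astar := by
    refine hgd0.congr_deriv ?_
    push_cast
    simp only [Pi.pow_apply, Pi.mul_apply, Pi.div_apply, Pi.sub_apply, Pi.add_apply, ← hpdef]
    field_simp
    ring
  -- transfer to Kexp via local equality
  have hEq : (fun y => Kexp y Γ) =ᶠ[nhds astar]
      (fun y => (1 / 2) * Real.log (1 + Pss y Γ) +
      (1 / 2) * (1 + y ^ 2 * (Pss y Γ) ^ 2 / ((1 + Pss y Γ) ^ 2 - y ^ 2)) / (1 + Pss y Γ)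
      - 1 / 2) := by
    have hm : Set.Ioo (-1 : ℝ) 1 ∈ nhds astar := Ioo_mem_nhds (by linarith) h1
    exact Filter.eventually_of_mem hm
      (fun y hy => Kexp_eq (by nlinarith [hy.1, hy.2]) hΓ0 hΓ1)
  have hKd : HasDerivAt (fun y => Kexp y Γ)
      (-(astar * p ^ 2 * (((1 + astar ^ 2 + p) * (1 + p) - p * astar ^ 2) ^ 2
          - 2 * (1 + p) * ((1 + p) ^ 2 + astar ^ 4)))
        / ((1 - astar ^ 2) * ((1 + p) ^ 2 - astar ^ 2) ^ 3)) astar :=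
    hgd.congr_of_eventuallyEq hEq
  -- the interior maximum kills the derivative
  have hloc : IsLocalMax (fun y => Kexp y Γ) astar := by
    have hm : Set.Ioo (0 : ℝ) 1 ∈ nhds astar := Ioo_mem_nhds h0 h1
    exact Filter.eventually_of_mem hm (fun y hy => hmax y ⟨le_of_lt hy.1, hy.2⟩)
  have hval := hloc.hasDerivAt_eq_zero hKd
  -- extract the vanishing polynomial factor
  have hX : ((1 + astar ^ 2 + p) * (1 + p) - p * astar ^ 2) ^ 2
      - 2 * (1 + p) * ((1 + p) ^ 2 + astar ^ 4) = 0 := by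
    rw [div_eq_zero_iff] at hval
    rcases hval with h | h
    · have h' := neg_eq_zero.mp h
      rcases mul_eq_zero.mp h' with h'' | h''
      · exact absurd h'' (mul_ne_zero (ne_of_gt h0) (pow_ne_zero 2 (ne_of_gt hp)))
      · exact h''
    · exact absurd h (mul_ne_zero (ne_of_gt h1a) (pow_ne_zero 3 (ne_of_gt hd)))
  -- rewrite the stationarity expression and conclude
  have hA : 1 + astar ^ 2 + Γ * (1 - astar ^ 2)
      = ((1 + astar ^ 2 + p) * (1 + p) - p * astar ^ 2) / (1 + p) := by
    rw [eq_div_iff hrne]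
    linear_combination -hquad
  rw [hA]
  have hfin : (((1 + astar ^ 2 + p) * (1 + p) - p * astar ^ 2) / (1 + p)) ^ 2 -
      2 * ((1 + p) + astar ^ 4 / (1 + p)) =
      (((1 + astar ^ 2 + p) * (1 + p) - p * astar ^ 2) ^ 2 -
        2 * (1 + p) * ((1 + p) ^ 2 + astar ^ 4)) / (1 + p) ^ 2 := by
    field_simp
  rw [hfin, hX, zero_div]
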